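/- Let (Ω, ℙ) carry the multilabel masking model with l labels and propensities p₁,…,p_l ∈ (0,1], and let f* : {0,1}^l × 𝒳 → ℝ be measurable. Define f : {0,1}^l × 𝒳 → ℝ by f(y, x) := (∏_{i ∈ I(y)} 1/p_i) · Σ_{𝒥 ⊆ I(y)} f*(𝟙_𝒥, x) · ∏_{j ∈ I(y) \ 𝒥} (p_j − 1), where 𝟙_𝒥 ∈ {0,1}^l is the indicator vector of the subset 𝒥 ⊆ {1,…,l} and the sum runs over all subsets 𝒥 of I(y). Then, assuming all expectations exist, 𝔼[f(Y, X)] = 𝔼[f*(Y*, X)]. -/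

import Mathlib

open MeasureTheory ProbabilityTheory

/-- The set of positive labels `I(y) = {i : yᵢ = 1}` of a label vector `y ∈ {0,1}^l`. -/
noncomputable def posSet {l : ℕ} (y : Fin l → ℝ) : Finset (Fin l) :=
  Finset.univ.filter (fun i => y i = 1)

/-- The indicator vector `𝟙_𝒥 ∈ {0,1}^l` of a subset `𝒥 ⊆ {1,…,l}`. -/
def indVec {l : ℕ} (J : Finset (Fin l)) : Fin l → ℝ := fun i => if i ∈ J then 1 else 0

/-- The propensity-scored version of a general multilabel loss:
`f(y, x) = (∏_{i ∈ I(y)} 1/pᵢ) · Σ_{𝒥 ⊆ I(y)} f*(𝟙_𝒥, x) · ∏_{j ∈ I(y) \ 𝒥} (pⱼ − 1)`. -/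
noncomputable def psML {l : ℕ} {𝒳 : Type*} (p : Fin l → ℝ)
    (fstar : (Fin l → ℝ) → 𝒳 → ℝ) : (Fin l → ℝ) → 𝒳 → ℝ :=
  fun y x => (∏ i ∈ posSet y, (p i)⁻¹) *
    ∑ J ∈ (posSet y).powerset, fstar (indVec J) x * ∏ j ∈ posSet y \ J, (p j - 1)

section Aux

variable {l : ℕ}

lemma mem_posSet_iff {y : Fin l → ℝ} {i : Fin l} : i ∈ posSet y ↔ y i = 1 := by
  simp [posSet]

lemma posSet_indVec (J : Finset (Fin l)) : posSet (indVec J) = J := by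
  ext i
  by_cases h : i ∈ J <;> simp [mem_posSet_iff, indVec, h]

lemma indVec_posSet {y : Fin l → ℝ} (hy : ∀ i, y i = 0 ∨ y i = 1) :
    indVec (posSet y) = y := by
  funext i
  rcases hy i with h | h <;> simp [indVec, mem_posSet_iff, h]

lemma eq_indVec_iff {y : Fin l → ℝ} (hy : ∀ i, y i = 0 ∨ y i = 1) (s : Finset (Fin l)) :
    y = indVec s ↔ posSet y = s := by
  constructor
  · rintro rfl; exact posSet_indVec s
  · rintro rfl; exact (indVec_posSet hy).symm

/-- The set of mask vectors matching `indVec K` on `s`. -/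
def maskSet (s K : Finset (Fin l)) : Set (Fin l → ℝ) := {v | ∀ i ∈ s, v i = indVec K i}

/-- Indicator (as a real valued function on label vectors) of being equal to `indVec s`. -/
noncomputable def indY (s : Finset (Fin l)) : (Fin l → ℝ) → ℝ :=
  ({indVec s} : Set (Fin l → ℝ)).indicator (fun _ => (1 : ℝ))

/-- Indicator of matching the mask pattern `K` on `s`. -/
noncomputable def indM (s K : Finset (Fin l)) : (Fin l → ℝ) → ℝ :=
  (maskSet s K).indicator (fun _ => (1 : ℝ))

lemma measurableSet_maskSet (s K : Finset (Fin l)) : MeasurableSet (maskSet s K) := by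
  have h : maskSet s K = ⋂ i ∈ s, (fun v : Fin l → ℝ => v i) ⁻¹' {indVec K i} := by
    ext v; simp [maskSet]
  rw [h]
  exact Finset.measurableSet_biInter s fun i _ =>
    (measurable_pi_apply i) (measurableSet_singleton _)

lemma measurable_indY (s : Finset (Fin l)) : Measurable (indY s) :=
  (measurable_const (a := (1 : ℝ))).indicator (measurableSet_singleton _)

lemma measurable_indM (s K : Finset (Fin l)) : Measurable (indM s K) :=
  (measurable_const (a := (1 : ℝ))).indicator (measurableSet_maskSet s K)

lemma indY_of_eq {s : Finset (Fin l)} {y : Fin l → ℝ} (h : y = indVec s) : indY s y = 1 :=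
  Set.indicator_of_mem (by simpa using h) _

lemma indY_of_ne {s : Finset (Fin l)} {y : Fin l → ℝ} (h : y ≠ indVec s) : indY s y = 0 :=
  Set.indicator_of_notMem (by simpa using h) _

lemma indM_of_mem {s K : Finset (Fin l)} {m : Fin l → ℝ} (h : m ∈ maskSet s K) :
    indM s K m = 1 := Set.indicator_of_mem h _

lemma indM_of_not_mem {s K : Finset (Fin l)} {m : Fin l → ℝ} (h : m ∉ maskSet s K) :
    indM s K m = 0 := Set.indicator_of_notMem h _

/-- If `m` is a 0/1 vector, the `maskSet s K` condition determines `K` as `posSet m ∩ s`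
(for `K ⊆ s`). -/
lemma maskSet_eq_iff {s K : Finset (Fin l)} (hK : K ⊆ s) {m : Fin l → ℝ}
    (hm : ∀ i, m i = 0 ∨ m i = 1) :
    m ∈ maskSet s K ↔ K = posSet m ∩ s := by
  constructor
  · intro h
    ext i
    constructor
    · intro hi
      have his : i ∈ s := hK hi
      have hv := h i his
      simp only [indVec, hi, if_true] at hv
      exact Finset.mem_inter.2 ⟨mem_posSet_iff.2 hv, his⟩
    · intro hi
      rcases Finset.mem_inter.1 hi with ⟨him, his⟩
      have hv := h i his
      by_contra hiK
      simp only [indVec, hiK, if_false] at hv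
      rw [mem_posSet_iff.1 him] at hv
      norm_num at hv
  · rintro rfl i his
    rcases hm i with h0 | h1
    · have hnot : i ∉ posSet m ∩ s := fun hc => by
        have h' := mem_posSet_iff.1 (Finset.mem_inter.1 hc).1
        rw [h0] at h'; norm_num at h'
      simp [indVec, hnot, h0]
    · have hin : i ∈ posSet m ∩ s := Finset.mem_inter.2 ⟨mem_posSet_iff.2 h1, his⟩
      simp [indVec, hin, h1]

/-- On the event `{Y⋆ = indVec s}` intersected with the mask event, the observed label
vector `M ⊙ Y⋆` equals `indVec K`. -/
lemma mask_mul_eq {m y : Fin l → ℝ} {s K : Finset (Fin l)} (hK : K ⊆ s)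
    (hy : y = indVec s) (hm : ∀ i ∈ s, m i = indVec K i) :
    (fun i => m i * y i) = indVec K := by
  funext i
  by_cases hi : i ∈ s
  · have hyi : y i = 1 := by rw [hy]; simp [indVec, hi]
    rw [hyi, mul_one]
    exact hm i hi
  · have hyi : y i = 0 := by rw [hy]; simp [indVec, hi]
    have hiK : i ∉ K := fun hc => hi (hK hc)
    rw [hyi, mul_zero]
    simp [indVec, hiK]

/-- Exchange of summation over nested powersets. -/
lemma sum_powerset_powerset {α M : Type*} [DecidableEq α] [AddCommMonoid M]
    (s : Finset α) (f : Finset α → Finset α → M) :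
    ∑ K ∈ s.powerset, ∑ J ∈ K.powerset, f J K
      = ∑ J ∈ s.powerset, ∑ A ∈ (s \ J).powerset, f J (J ∪ A) := by
  rw [Finset.sum_sigma', Finset.sum_sigma']
  refine Finset.sum_nbij' (fun x => ⟨x.2, x.1 \ x.2⟩) (fun x => ⟨x.1 ∪ x.2, x.1⟩)
    ?_ ?_ ?_ ?_ ?_
  · rintro ⟨K, J⟩ hx
    simp only [Finset.mem_sigma, Finset.mem_powerset] at hx ⊢
    exact ⟨hx.2.trans hx.1, Finset.sdiff_subset_sdiff hx.1 le_rfl⟩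
  · rintro ⟨J, A⟩ hx
    simp only [Finset.mem_sigma, Finset.mem_powerset] at hx ⊢
    exact ⟨Finset.union_subset hx.1 (hx.2.trans Finset.sdiff_subset),
      Finset.subset_union_left⟩
  · rintro ⟨K, J⟩ hx
    simp only [Finset.mem_sigma, Finset.mem_powerset] at hx
    simp only [Sigma.mk.inj_iff, heq_eq_eq]
    exact ⟨Finset.union_sdiff_of_subset hx.2, trivial⟩
  · rintro ⟨J, A⟩ hx
    simp only [Finset.mem_sigma, Finset.mem_powerset] at hx
    simp only [Sigma.mk.inj_iff, heq_eq_eq]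
    have hdisj : Disjoint J A := Finset.disjoint_left.2 fun a haJ haA =>
      (Finset.mem_sdiff.1 (hx.2 haA)).2 haJ
    exact ⟨trivial, Finset.union_sdiff_cancel_left hdisj⟩
  · rintro ⟨K, J⟩ hx
    simp only [Finset.mem_sigma, Finset.mem_powerset] at hx
    rw [Finset.union_sdiff_of_subset hx.2]

/-- The key algebraic identity: the weighted combination of `psML` values over
subpatterns of `s` recovers `fstar (indVec s)`. -/
lemma alg_identity {𝒳 : Type*} (p : Fin l → ℝ) (hp : ∀ i, p i ∈ Set.Ioc (0 : ℝ) 1)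
    (fstar : (Fin l → ℝ) → 𝒳 → ℝ) (s : Finset (Fin l)) (x : 𝒳) :
    ∑ K ∈ s.powerset, ((∏ i ∈ K, p i) * ∏ i ∈ s \ K, (1 - p i)) * psML p fstar (indVec K) x
      = fstar (indVec s) x := by
  have hstep : ∀ K ∈ s.powerset,
      ((∏ i ∈ K, p i) * ∏ i ∈ s \ K, (1 - p i)) * psML p fstar (indVec K) x
        = ∑ J ∈ K.powerset,
            fstar (indVec J) x * ((∏ j ∈ K \ J, (p j - 1)) * ∏ i ∈ s \ K, (1 - p i)) := by
    intro K _hK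
    have hprod : (∏ i ∈ K, p i) * ∏ i ∈ K, (p i)⁻¹ = 1 := by
      rw [← Finset.prod_mul_distrib]
      exact Finset.prod_eq_one fun i _ => mul_inv_cancel₀ (ne_of_gt (hp i).1)
    simp only [psML, posSet_indVec]
    rw [show ((∏ i ∈ K, p i) * ∏ i ∈ s \ K, (1 - p i)) *
        ((∏ i ∈ K, (p i)⁻¹) * ∑ J ∈ K.powerset, fstar (indVec J) x * ∏ j ∈ K \ J, (p j - 1))
        = ((∏ i ∈ K, p i) * ∏ i ∈ K, (p i)⁻¹) *
          ((∏ i ∈ s \ K, (1 - p i)) *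
            ∑ J ∈ K.powerset, fstar (indVec J) x * ∏ j ∈ K \ J, (p j - 1)) by ring,
      hprod, one_mul, Finset.mul_sum]
    exact Finset.sum_congr rfl fun J _ => by ring
  rw [Finset.sum_congr rfl hstep, sum_powerset_powerset]
  have hinner : ∀ J ∈ s.powerset,
      (∑ A ∈ (s \ J).powerset,
          fstar (indVec J) x *
            ((∏ j ∈ (J ∪ A) \ J, (p j - 1)) * ∏ i ∈ s \ (J ∪ A), (1 - p i)))
        = fstar (indVec J) x * (0 : ℝ) ^ (s \ J).card := by
    intro J _hJ
    rw [← Finset.mul_sum]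
    congr 1
    have hsum : ∀ A ∈ (s \ J).powerset,
        (∏ j ∈ (J ∪ A) \ J, (p j - 1)) * ∏ i ∈ s \ (J ∪ A), (1 - p i)
          = (∏ j ∈ A, (p j - 1)) * ∏ i ∈ (s \ J) \ A, (1 - p i) := by
      intro A hA
      have hA' : A ⊆ s \ J := Finset.mem_powerset.1 hA
      have hdisj : Disjoint J A := Finset.disjoint_left.2 fun a haJ haA =>
        (Finset.mem_sdiff.1 (hA' haA)).2 haJ
      have hset : s \ (J ∪ A) = (s \ J) \ A := by
        ext i
        simp only [Finset.mem_sdiff, Finset.mem_union]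
        tauto
      rw [Finset.union_sdiff_cancel_left hdisj, hset]
    rw [Finset.sum_congr rfl hsum, ← Finset.prod_add]
    rw [show (∏ i ∈ s \ J, (p i - 1 + (1 - p i))) = ∏ _i ∈ s \ J, (0 : ℝ) from
      Finset.prod_congr rfl fun i _ => by ring]
    rw [Finset.prod_const]
  rw [Finset.sum_congr rfl hinner]
  rw [Finset.sum_eq_single s]
  · rw [Finset.sdiff_self, Finset.card_empty, pow_zero, mul_one]
  · intro J hJ hne
    have hnonempty : (s \ J).Nonempty := by
      rw [Finset.sdiff_nonempty]
      intro hsub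
      exact hne (Finset.Subset.antisymm (Finset.mem_powerset.1 hJ) hsub)
    rw [zero_pow (Finset.card_ne_zero_of_mem hnonempty.choose_spec), mul_zero]
  · intro h
    exact absurd (Finset.mem_powerset_self s) h

/-- Pointwise expansion of the observed-loss integrand over the joint pattern of
`Y⋆` and the mask. -/
lemma expand_obs {𝒳 : Type*} (p : Fin l → ℝ) (fstar : (Fin l → ℝ) → 𝒳 → ℝ)
    (m y : Fin l → ℝ) (x : 𝒳)
    (hm : ∀ i, m i = 0 ∨ m i = 1) (hy : ∀ i, y i = 0 ∨ y i = 1) :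
    psML p fstar (fun i => m i * y i) x
      = ∑ s : Finset (Fin l), ∑ K ∈ s.powerset,
          indM s K m * (indY s y * psML p fstar (indVec K) x) := by
  rw [Finset.sum_eq_single (posSet y)]
  · rw [Finset.sum_eq_single (posSet m ∩ posSet y)]
    · have hyeq : y = indVec (posSet y) := (indVec_posSet hy).symm
      have hmem : m ∈ maskSet (posSet y) (posSet m ∩ posSet y) :=
        (maskSet_eq_iff Finset.inter_subset_right hm).2 rfl
      rw [indM_of_mem hmem, indY_of_eq hyeq, one_mul, one_mul]
      congr 1
      exact mask_mul_eq Finset.inter_subset_right hyeq hmem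
    · intro K hK hne
      have hnm : m ∉ maskSet (posSet y) K := fun hc =>
        hne ((maskSet_eq_iff (Finset.mem_powerset.1 hK) hm).1 hc)
      rw [indM_of_not_mem hnm, zero_mul]
    · intro h
      exact absurd (Finset.mem_powerset.2 Finset.inter_subset_right) h
  · intro s _ hne
    refine Finset.sum_eq_zero fun K _ => ?_
    have hne' : y ≠ indVec s := fun hc => hne ((eq_indVec_iff hy s).1 hc).symm
    rw [indY_of_ne hne', zero_mul, mul_zero]
  · intro h
    exact absurd (Finset.mem_univ _) h

/-- Pointwise expansion of the true-loss integrand over the pattern of `Y⋆`. -/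
lemma expand_true {𝒳 : Type*} (fstar : (Fin l → ℝ) → 𝒳 → ℝ) (y : Fin l → ℝ) (x : 𝒳)
    (hy : ∀ i, y i = 0 ∨ y i = 1) :
    fstar y x = ∑ s : Finset (Fin l), indY s y * fstar (indVec s) x := by
  rw [Finset.sum_eq_single (posSet y)]
  · rw [indY_of_eq (indVec_posSet hy).symm, one_mul, indVec_posSet hy]
  · intro s _ hne
    have hne' : y ≠ indVec s := fun hc => hne ((eq_indVec_iff hy s).1 hc).symm
    rw [indY_of_ne hne', zero_mul]
  · intro h
    exact absurd (Finset.mem_univ _) h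

end Aux

/-- Stripping an independent indicator factor of positive probability from an
integrability statement. -/
lemma integrable_of_indicator_indep
    {Ω : Type*} [MeasurableSpace Ω] (P : Measure Ω) [IsProbabilityMeasure P]
    {𝒳 : Type*} [MeasurableSpace 𝒳] {l : ℕ}
    (X : Ω → 𝒳) (Ystar M : Ω → Fin l → ℝ)
    (hX : Measurable X) (hYstar : Measurable Ystar) (hM : Measurable M)
    (hindep : IndepFun (fun ω => (X ω, Ystar ω)) M P)
    (C : Set (Fin l → ℝ)) (hC : MeasurableSet C) (hPC : P (M ⁻¹' C) ≠ 0)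
    (g : 𝒳 × (Fin l → ℝ) → ℝ) (hg : Measurable g)
    (hint : Integrable (fun ω => C.indicator (fun _ => (1 : ℝ)) (M ω) * g (X ω, Ystar ω)) P) :
    Integrable (fun ω => g (X ω, Ystar ω)) P := by
  have hmeasW : Measurable fun ω => (X ω, Ystar ω) := hX.prodMk hYstar
  refine ⟨(hg.comp hmeasW).aestronglyMeasurable, ?_⟩
  have hF : Measurable fun q : 𝒳 × (Fin l → ℝ) => (‖g q‖₊ : ENNReal) := hg.nnnorm.coe_nnreal_ennreal
  have hG : Measurable (C.indicator fun _ => (1 : ENNReal)) :=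
    measurable_const.indicator hC
  have hIndep2 : IndepFun (fun ω => (‖g (X ω, Ystar ω)‖₊ : ENNReal))
      (fun ω => C.indicator (fun _ => (1 : ENNReal)) (M ω)) P :=
    hindep.comp hF hG
  have hmul := lintegral_mul_eq_lintegral_mul_lintegral_of_indepFun''
    ((hF.comp hmeasW).aemeasurable) ((hG.comp hM).aemeasurable) hIndep2
  simp only [Function.comp_apply] at hmul
  have hGint : ∫⁻ ω, C.indicator (fun _ => (1 : ENNReal)) (M ω) ∂P = P (M ⁻¹' C) := by
    have heq : (fun ω => C.indicator (fun _ => (1 : ENNReal)) (M ω))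
        = (M ⁻¹' C).indicator (fun _ => (1 : ENNReal)) := by
      funext ω
      by_cases h : M ω ∈ C
      · rw [Set.indicator_of_mem h, Set.indicator_of_mem (show ω ∈ M ⁻¹' C from h)]
      · rw [Set.indicator_of_notMem h,
          Set.indicator_of_notMem (show ω ∉ M ⁻¹' C from h)]
    rw [heq, lintegral_indicator (hM hC), setLIntegral_one]
  have hpt : ∀ ω, (‖g (X ω, Ystar ω)‖₊ : ENNReal)
        * C.indicator (fun _ => (1 : ENNReal)) (M ω)
      = (‖C.indicator (fun _ => (1 : ℝ)) (M ω) * g (X ω, Ystar ω)‖₊ : ENNReal) := by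
    intro ω
    by_cases h : M ω ∈ C
    · rw [Set.indicator_of_mem h, Set.indicator_of_mem h, one_mul, mul_one]
    · rw [Set.indicator_of_notMem h, Set.indicator_of_notMem h, zero_mul, mul_zero]
      simp
  have hfin : (∫⁻ ω, (‖g (X ω, Ystar ω)‖₊ : ENNReal) ∂P) * P (M ⁻¹' C) < ⊤ := by
    rw [← hGint, ← hmul]
    calc ∫⁻ ω, (‖g (X ω, Ystar ω)‖₊ : ENNReal)
          * C.indicator (fun _ => (1 : ENNReal)) (M ω) ∂P
        = ∫⁻ ω, (‖C.indicator (fun _ => (1 : ℝ)) (M ω) * g (X ω, Ystar ω)‖₊ : ENNReal) ∂P :=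
          lintegral_congr hpt
      _ < ⊤ := hint.2
  have hA : ∫⁻ ω, (‖g (X ω, Ystar ω)‖₊ : ENNReal) ∂P ≠ ⊤ := by
    intro htop
    rw [htop, ENNReal.top_mul hPC] at hfin
    exact lt_irrefl ⊤ hfin
  exact lt_top_iff_ne_top.2 hA

/-- **Unbiased estimate for general multilabel losses.** Under the multilabel masking model
with `l` labels and propensities `p i ∈ (0,1]` (mask coordinates mutually independent and
jointly independent of `(X, Y*)`), for any measurable `f* : {0,1}^l × 𝒳 → ℝ` one has
`𝔼[f(Y, X)] = 𝔼[f*(Y*, X)]` where `f = psML p f*` and `Y = M ⊙ Y*`. -/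
theorem unbiased_general_multilabel
    {Ω : Type*} [MeasurableSpace Ω] (P : Measure Ω) [IsProbabilityMeasure P]
    {𝒳 : Type*} [MeasurableSpace 𝒳]
    (l : ℕ) (X : Ω → 𝒳) (Ystar M : Ω → Fin l → ℝ)
    (hX : Measurable X) (hYstar : Measurable Ystar) (hM : Measurable M)
    (hYstar01 : ∀ ω i, Ystar ω i = 0 ∨ Ystar ω i = 1)
    (hM01 : ∀ ω i, M ω i = 0 ∨ M ω i = 1)
    (p : Fin l → ℝ) (hp : ∀ i, p i ∈ Set.Ioc (0 : ℝ) 1)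
    (hMindep : iIndepFun
      (fun i ω => M ω i) P)
    (hindep : IndepFun (fun ω => (X ω, Ystar ω)) M P)
    (hMp : ∀ i, P {ω | M ω i = 1} = ENNReal.ofReal (p i))
    (fstar : (Fin l → ℝ) → 𝒳 → ℝ) (hf : Measurable (Function.uncurry fstar))
    (hint_obs : Integrable
      (fun ω => psML p fstar (fun i => M ω i * Ystar ω i) (X ω)) P)
    (hint_true : Integrable (fun ω => fstar (Ystar ω) (X ω)) P) :
    ∫ ω, psML p fstar (fun i => M ω i * Ystar ω i) (X ω) ∂P
      = ∫ ω, fstar (Ystar ω) (X ω) ∂P := by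
  classical
  -- the weight of the mask pattern `K` inside `s`
  let w : Finset (Fin l) → Finset (Fin l) → ℝ :=
    fun s K => (∏ i ∈ K, p i) * ∏ i ∈ s \ K, (1 - p i)
  have hw_def : ∀ s K : Finset (Fin l), w s K = (∏ i ∈ K, p i) * ∏ i ∈ s \ K, (1 - p i) :=
    fun s K => rfl
  have hw_nonneg : ∀ s K : Finset (Fin l), 0 ≤ w s K := fun s K =>
    mul_nonneg (Finset.prod_nonneg fun i _ => (hp i).1.le)
      (Finset.prod_nonneg fun i _ => by linarith [(hp i).2])
  -- probabilities of the mask events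
  have measB : ∀ s K : Finset (Fin l), K ⊆ s →
      P (M ⁻¹' maskSet s K) = ENNReal.ofReal (w s K) := by
    intro s K hK
    have hpre : M ⁻¹' maskSet s K = ⋂ i ∈ s, (fun ω => M ω i) ⁻¹' {indVec K i} := by
      ext ω
      simp [maskSet, Set.mem_iInter]
    rw [hpre,
      hMindep.meas_biInter fun i _ => ⟨{indVec K i}, measurableSet_singleton _, rfl⟩]
    have hPone : ∀ i ∈ K, P ((fun ω => M ω i) ⁻¹' {indVec K i}) = ENNReal.ofReal (p i) := by
      intro i hi
      have hset : (fun ω => M ω i) ⁻¹' {indVec K i} = {ω | M ω i = 1} := by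
        ext ω; simp [indVec, hi]
      rw [hset]; exact hMp i
    have hPzero : ∀ i ∈ s \ K,
        P ((fun ω => M ω i) ⁻¹' {indVec K i}) = ENNReal.ofReal (1 - p i) := by
      intro i hi
      have hiK : i ∉ K := (Finset.mem_sdiff.1 hi).2
      have hset : (fun ω => M ω i) ⁻¹' {indVec K i} = {ω | M ω i = 1}ᶜ := by
        ext ω
        rcases hM01 ω i with h | h <;> simp [indVec, hiK, h]
      have hmeas1 : MeasurableSet {ω | M ω i = 1} :=
        ((measurable_pi_apply i).comp hM) (measurableSet_singleton (1 : ℝ))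
      rw [hset, measure_compl hmeas1 (measure_ne_top _ _), hMp i, measure_univ,
        ← ENNReal.ofReal_one, ← ENNReal.ofReal_sub _ (hp i).1.le]
    rw [← Finset.prod_sdiff hK, Finset.prod_congr rfl hPzero, Finset.prod_congr rfl hPone,
      ← ENNReal.ofReal_prod_of_nonneg (fun i _ => by linarith [(hp i).2] : ∀ i ∈ s \ K, 0 ≤ 1 - p i),
      ← ENNReal.ofReal_prod_of_nonneg (fun i _ => (hp i).1.le),
      ← ENNReal.ofReal_mul (Finset.prod_nonneg fun i _ => by linarith [(hp i).2])]
    rw [hw_def]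
    congr 1
    ring
  -- measurability facts
  have hAmeas : ∀ s : Finset (Fin l), MeasurableSet (Ystar ⁻¹' {indVec s}) := fun s =>
    hYstar (measurableSet_singleton _)
  have hBmeas : ∀ s K : Finset (Fin l), MeasurableSet (M ⁻¹' maskSet s K) := fun s K =>
    hM (measurableSet_maskSet s K)
  have hfv : ∀ v : Fin l → ℝ, Measurable fun x : 𝒳 => fstar v x := fun v =>
    hf.comp measurable_prodMk_left
  have hpsml_meas : ∀ K : Finset (Fin l), Measurable fun x : 𝒳 => psML p fstar (indVec K) x := by
    intro K
    simp only [psML]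
    exact (Finset.measurable_sum _ fun J _ => (hfv (indVec J)).mul_const _).const_mul _
  have hg_meas : ∀ s K : Finset (Fin l),
      Measurable fun q : 𝒳 × (Fin l → ℝ) => indY s q.2 * psML p fstar (indVec K) q.1 :=
    fun s K => ((measurable_indY s).comp measurable_snd).mul
      ((hpsml_meas K).comp measurable_fst)
  -- the summands of the expansion are indicators of the observed-loss integrand
  have hobs_eq : ∀ s K : Finset (Fin l), K ⊆ s →
      (fun ω => indM s K (M ω) * (indY s (Ystar ω) * psML p fstar (indVec K) (X ω)))
        = (M ⁻¹' maskSet s K ∩ Ystar ⁻¹' {indVec s}).indicator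
            (fun ω => psML p fstar (fun i => M ω i * Ystar ω i) (X ω)) := by
    intro s K hK
    funext ω
    by_cases hA : Ystar ω = indVec s
    · by_cases hB : M ω ∈ maskSet s K
      · have hmem : ω ∈ M ⁻¹' maskSet s K ∩ Ystar ⁻¹' {indVec s} := ⟨hB, hA⟩
        rw [indM_of_mem hB, indY_of_eq hA, one_mul, one_mul, Set.indicator_of_mem hmem,
          mask_mul_eq hK hA hB]
      · rw [indM_of_not_mem hB, zero_mul,
          Set.indicator_of_notMem (fun hc => hB hc.1)]
    · rw [indY_of_ne hA, zero_mul, mul_zero,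
        Set.indicator_of_notMem (fun hc => hA hc.2)]
  have hobs_int : ∀ s K : Finset (Fin l), K ⊆ s →
      Integrable
        (fun ω => indM s K (M ω) * (indY s (Ystar ω) * psML p fstar (indVec K) (X ω))) P := by
    intro s K hK
    rw [hobs_eq s K hK]
    exact hint_obs.indicator ((hBmeas s K).inter (hAmeas s))
  -- key integrability claim, by strong induction on the pattern `J`
  have key : ∀ s J : Finset (Fin l), J ⊆ s → (∀ i ∈ s \ J, p i ≠ 1) →
      Integrable (fun ω => indY s (Ystar ω) * fstar (indVec J) (X ω)) P := by
    intro s J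
    induction J using Finset.strongInduction with
    | _ J ih =>
      intro hJs hJ1
      have hwpos : 0 < w s J :=
        mul_pos (Finset.prod_pos fun i _ => (hp i).1)
          (Finset.prod_pos fun i hi => sub_pos.2 (lt_of_le_of_ne (hp i).2 (hJ1 i hi)))
      have hPB : P (M ⁻¹' maskSet s J) ≠ 0 := by
        rw [measB s J hJs]
        simp [ENNReal.ofReal_eq_zero, not_le, hwpos]
      have hP1 : Integrable (fun ω => indY s (Ystar ω) * psML p fstar (indVec J) (X ω)) P := by
        refine integrable_of_indicator_indep P X Ystar M hX hYstar hM hindep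
          (maskSet s J) (measurableSet_maskSet s J) hPB
          (fun q => indY s q.2 * psML p fstar (indVec J) q.1) (hg_meas s J) ?_
        exact hobs_int s J hJs
      have hprod : (∏ i ∈ J, p i) * ∏ i ∈ J, (p i)⁻¹ = 1 := by
        rw [← Finset.prod_mul_distrib]
        exact Finset.prod_eq_one fun i _ => mul_inv_cancel₀ (ne_of_gt (hp i).1)
      have hexp : (fun ω => indY s (Ystar ω) * fstar (indVec J) (X ω))
          = fun ω => (∏ i ∈ J, p i) * (indY s (Ystar ω) * psML p fstar (indVec J) (X ω))
              - ∑ J' ∈ J.powerset.erase J, (∏ j ∈ J \ J', (p j - 1)) *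
                  (indY s (Ystar ω) * fstar (indVec J') (X ω)) := by
        funext ω
        simp only [psML, posSet_indVec]
        rw [
          ← Finset.sum_erase_add _ _ (Finset.mem_powerset_self J),
          Finset.sdiff_self, Finset.prod_empty, mul_one]
        have hsum : ∑ J' ∈ J.powerset.erase J, (∏ j ∈ J \ J', (p j - 1)) *
              (indY s (Ystar ω) * fstar (indVec J') (X ω))
            = indY s (Ystar ω) * ∑ J' ∈ J.powerset.erase J,
                fstar (indVec J') (X ω) * ∏ j ∈ J \ J', (p j - 1) := by
          rw [Finset.mul_sum]
          exact Finset.sum_congr rfl fun _ _ => by ring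
        rw [hsum]
        generalize (∑ J' ∈ J.powerset.erase J,
          fstar (indVec J') (X ω) * ∏ j ∈ J \ J', (p j - 1)) = S
        set c := indY s (Ystar ω)
        set F := fstar (indVec J) (X ω)
        linear_combination (-(c * (S + F))) * hprod
      rw [hexp]
      refine (hP1.const_mul _).sub (integrable_finset_sum _ fun J' hJ' => ?_)
      by_cases hc : (∏ j ∈ J \ J', (p j - 1)) = 0
      · simp only [hc, zero_mul]
        exact integrable_const 0
      · refine Integrable.const_mul ?_ _
        have hJ'mem := Finset.mem_erase.1 hJ'
        have hsub : J' ⊆ J := Finset.mem_powerset.1 hJ'mem.2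
        refine ih J' (Finset.ssubset_iff_subset_ne.2 ⟨hsub, hJ'mem.1⟩) (hsub.trans hJs) ?_
        intro i hi
        rcases Finset.mem_sdiff.1 hi with ⟨his, hiJ'⟩
        by_cases hiJ : i ∈ J
        · intro hpi
          exact hc (Finset.prod_eq_zero (Finset.mem_sdiff.2 ⟨hiJ, hiJ'⟩) (by rw [hpi]; ring))
        · exact hJ1 i (Finset.mem_sdiff.2 ⟨his, hiJ⟩)
  -- integrability of `indY ⬝ psML(indVec K, X)` for admissible patterns
  have hpsml_int : ∀ s K : Finset (Fin l), K ⊆ s → (∀ i ∈ s \ K, p i ≠ 1) →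
      Integrable (fun ω => indY s (Ystar ω) * psML p fstar (indVec K) (X ω)) P := by
    intro s K hKs hK1
    have hfneq : (fun ω => indY s (Ystar ω) * psML p fstar (indVec K) (X ω))
        = fun ω => ∑ J ∈ K.powerset, ((∏ i ∈ K, (p i)⁻¹) * ∏ j ∈ K \ J, (p j - 1)) *
            (indY s (Ystar ω) * fstar (indVec J) (X ω)) := by
      funext ω
      simp only [psML, posSet_indVec, Finset.mul_sum]
      exact Finset.sum_congr rfl fun J _ => by ring
    rw [hfneq]
    refine integrable_finset_sum _ fun J hJ => ?_
    by_cases hc : (∏ j ∈ K \ J, (p j - 1)) = 0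
    · simp only [hc, mul_zero, zero_mul]
      exact integrable_const 0
    · refine Integrable.const_mul ?_ _
      refine key s J ((Finset.mem_powerset.1 hJ).trans hKs) ?_
      intro i hi
      rcases Finset.mem_sdiff.1 hi with ⟨his, hiJ⟩
      by_cases hiK : i ∈ K
      · intro hpi
        exact hc (Finset.prod_eq_zero (Finset.mem_sdiff.2 ⟨hiK, hiJ⟩) (by rw [hpi]; ring))
      · exact hK1 i (Finset.mem_sdiff.2 ⟨his, hiK⟩)
  have hne1_of_w : ∀ s K : Finset (Fin l), w s K ≠ 0 → ∀ i ∈ s \ K, p i ≠ 1 := by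
    intro s K hw0 i hi hpi
    exact hw0 (mul_eq_zero_of_right _
      (Finset.prod_eq_zero hi (by rw [hpi]; ring)))
  -- value of the per-term integral
  have hterm_val : ∀ s K : Finset (Fin l), K ⊆ s →
      ∫ ω, indM s K (M ω) * (indY s (Ystar ω) * psML p fstar (indVec K) (X ω)) ∂P
        = w s K * ∫ ω, indY s (Ystar ω) * psML p fstar (indVec K) (X ω) ∂P := by
    intro s K hKs
    by_cases hw0 : w s K = 0
    · have hPB : P (M ⁻¹' maskSet s K) = 0 := by
        rw [measB s K hKs, hw0, ENNReal.ofReal_zero]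
      rw [hw0, zero_mul]
      have hae : (fun ω => indM s K (M ω) *
            (indY s (Ystar ω) * psML p fstar (indVec K) (X ω))) =ᵐ[P]
          (fun _ => (0 : ℝ)) := by
        filter_upwards [measure_eq_zero_iff_ae_notMem.1 hPB] with ω hω
        rw [indM_of_not_mem hω, zero_mul]
      rw [integral_congr_ae hae, integral_zero]
    · have hInt2 := hpsml_int s K hKs (hne1_of_w s K hw0)
      have hIndep2 : IndepFun (fun ω => indM s K (M ω))
          (fun ω => indY s (Ystar ω) * psML p fstar (indVec K) (X ω)) P :=
        (hindep.comp (hg_meas s K) (measurable_indM s K)).symm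
      have hindM_eq : (fun ω => indM s K (M ω))
          = (M ⁻¹' maskSet s K).indicator (fun _ => (1 : ℝ)) := by
        funext ω
        by_cases h : M ω ∈ maskSet s K
        · rw [indM_of_mem h,
            Set.indicator_of_mem (show ω ∈ M ⁻¹' maskSet s K from h)]
        · rw [indM_of_not_mem h,
            Set.indicator_of_notMem (show ω ∉ M ⁻¹' maskSet s K from h)]
      have hintM : Integrable (fun ω => indM s K (M ω)) P := by
        rw [hindM_eq]
        exact (integrable_const 1).indicator (hBmeas s K)
      have hmul := hIndep2.integral_fun_mul_eq_mul_integral hintM.aestronglyMeasurable hInt2.aestronglyMeasurable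
      have hIM : ∫ ω, indM s K (M ω) ∂P = w s K := by
        rw [hindM_eq, integral_indicator_const (1 : ℝ) (hBmeas s K), measureReal_def, measB s K hKs,
          ENNReal.toReal_ofReal (hw_nonneg s K), smul_eq_mul, mul_one]
      calc ∫ ω, indM s K (M ω) * (indY s (Ystar ω) * psML p fstar (indVec K) (X ω)) ∂P
          = (∫ ω, indM s K (M ω) ∂P) *
              ∫ ω, indY s (Ystar ω) * psML p fstar (indVec K) (X ω) ∂P := hmul
        _ = w s K * ∫ ω, indY s (Ystar ω) * psML p fstar (indVec K) (X ω) ∂P := by rw [hIM]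
  -- integrability of the summands of the true-loss expansion
  have htrue_eq : ∀ s : Finset (Fin l),
      (fun ω => indY s (Ystar ω) * fstar (indVec s) (X ω))
        = (Ystar ⁻¹' {indVec s}).indicator (fun ω => fstar (Ystar ω) (X ω)) := by
    intro s
    funext ω
    by_cases h : Ystar ω = indVec s
    · rw [indY_of_eq h, one_mul,
        Set.indicator_of_mem (show ω ∈ Ystar ⁻¹' {indVec s} from h), h]
    · rw [indY_of_ne h, zero_mul,
        Set.indicator_of_notMem (show ω ∉ Ystar ⁻¹' {indVec s} from h)]
  have htrue_int : ∀ s : Finset (Fin l),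
      Integrable (fun ω => indY s (Ystar ω) * fstar (indVec s) (X ω)) P := by
    intro s
    rw [htrue_eq s]
    exact hint_true.indicator (hAmeas s)
  -- main computation
  calc
    ∫ ω, psML p fstar (fun i => M ω i * Ystar ω i) (X ω) ∂P
        = ∫ ω, ∑ s : Finset (Fin l), ∑ K ∈ s.powerset,
            indM s K (M ω) * (indY s (Ystar ω) * psML p fstar (indVec K) (X ω)) ∂P :=
      integral_congr_ae (Filter.Eventually.of_forall fun ω =>
        expand_obs p fstar (M ω) (Ystar ω) (X ω) (hM01 ω) (hYstar01 ω))
    _ = ∑ s : Finset (Fin l), ∑ K ∈ s.powerset,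
          ∫ ω, indM s K (M ω) * (indY s (Ystar ω) * psML p fstar (indVec K) (X ω)) ∂P := by
      rw [integral_finset_sum _ fun s _ => integrable_finset_sum _ fun K hK =>
        hobs_int s K (Finset.mem_powerset.1 hK)]
      exact Finset.sum_congr rfl fun s _ => integral_finset_sum _ fun K hK =>
        hobs_int s K (Finset.mem_powerset.1 hK)
    _ = ∑ s : Finset (Fin l), ∑ K ∈ s.powerset,
          w s K * ∫ ω, indY s (Ystar ω) * psML p fstar (indVec K) (X ω) ∂P :=
      Finset.sum_congr rfl fun s _ => Finset.sum_congr rfl fun K hK =>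
        hterm_val s K (Finset.mem_powerset.1 hK)
    _ = ∑ s : Finset (Fin l),
          ∫ ω, ∑ K ∈ s.powerset,
            w s K * (indY s (Ystar ω) * psML p fstar (indVec K) (X ω)) ∂P := by
      refine Finset.sum_congr rfl fun s _ => ?_
      rw [integral_finset_sum _ fun K hK => ?_]
      · exact Finset.sum_congr rfl fun K _ => (integral_const_mul _ _).symm
      · by_cases hw0 : w s K = 0
        · simp only [hw0, zero_mul]
          exact integrable_const 0
        · exact (hpsml_int s K (Finset.mem_powerset.1 hK)
            (hne1_of_w s K hw0)).const_mul _
    _ = ∑ s : Finset (Fin l), ∫ ω, indY s (Ystar ω) * fstar (indVec s) (X ω) ∂P := by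
      refine Finset.sum_congr rfl fun s _ => ?_
      refine integral_congr_ae (Filter.Eventually.of_forall fun ω => ?_)
      have halg := alg_identity p hp fstar s (X ω)
      calc ∑ K ∈ s.powerset, w s K * (indY s (Ystar ω) * psML p fstar (indVec K) (X ω))
          = indY s (Ystar ω) *
              ∑ K ∈ s.powerset, w s K * psML p fstar (indVec K) (X ω) := by
            rw [Finset.mul_sum]
            exact Finset.sum_congr rfl fun K _ => by ring
        _ = indY s (Ystar ω) * fstar (indVec s) (X ω) := by
            rw [← halg]
    _ = ∫ ω, ∑ s : Finset (Fin l), indY s (Ystar ω) * fstar (indVec s) (X ω) ∂P :=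
      (integral_finset_sum _ fun s _ => htrue_int s).symm
    _ = ∫ ω, fstar (Ystar ω) (X ω) ∂P :=
      integral_congr_ae (Filter.Eventually.of_forall fun ω =>
        (expand_true fstar (Ystar ω) (X ω) (hYstar01 ω)).symm)
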